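/- Let G be a finite simple undirected graph and suppose the subgraph induced on five vertices {v1,v2,v3,v4,v5} is the 5-cycle v1–v2–v3–v4–v5–v1. Then the number of 3-element subsets S of {v1,...,v5} such that the subgraph induced on S is a path on 3 vertices and both of the two remaining vertices belong to adj(S) equals exactly 5 (namely S ranges over the 5 sets of three consecutive cycle vertices); hence an induced C5 is counted in exactly 5 P3-Patterns and its final counter must be divided by 5. -/

import Mathlib

open Finset

variable {V : Type*}

/-- `adj(W)`: vertices outside `W` having a neighbor in `W`. -/
def adjW [Fintype V] [DecidableEq V] (G : SimpleGraph V) [DecidableRel G.Adj] (W : Finset V) :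
    Finset V :=
  univ.filter fun x => x ∉ W ∧ ∃ w ∈ W, G.Adj x w

/-- cycle adjacency on `Fin 5` -/
def C5adj (i j : Fin 5) : Prop := j = i + 1 ∨ i = j + 1

instance : DecidableRel C5adj := fun i j => by unfold C5adj; infer_instance

/-- If `{v₁,…,v₅}` induces the 5-cycle `v₁–v₂–v₃–v₄–v₅–v₁`, then exactly 5 of its 3-element
vertex subsets `S` induce a path on 3 vertices with both remaining vertices in `adj(S)`;
hence an induced `C₅` is counted in exactly 5 `P₃`-Patterns. -/
theorem stmt19 [Fintype V] [DecidableEq V] (G : SimpleGraph V) [DecidableRel G.Adj]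
    (v₁ v₂ v₃ v₄ v₅ : V) (hcard : ({v₁, v₂, v₃, v₄, v₅} : Finset V).card = 5)
    (h12 : G.Adj v₁ v₂) (h23 : G.Adj v₂ v₃) (h34 : G.Adj v₃ v₄) (h45 : G.Adj v₄ v₅)
    (h51 : G.Adj v₅ v₁)
    (h13 : ¬ G.Adj v₁ v₃) (h14 : ¬ G.Adj v₁ v₄) (h24 : ¬ G.Adj v₂ v₄)
    (h25 : ¬ G.Adj v₂ v₅) (h35 : ¬ G.Adj v₃ v₅) :
    ((({v₁, v₂, v₃, v₄, v₅} : Finset V).powersetCard 3).filter fun S =>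
        (∃ x y z : V, ({x, y, z} : Finset V) = S ∧ G.Adj x y ∧ G.Adj y z ∧ ¬ G.Adj x z) ∧
        ∀ w ∈ ({v₁, v₂, v₃, v₄, v₅} : Finset V) \ S, w ∈ adjW G S).card = 5 := by
  classical
  set f : Fin 5 → V := ![v₁, v₂, v₃, v₄, v₅] with hf
  have himg : (univ : Finset (Fin 5)).image f = {v₁, v₂, v₃, v₄, v₅} := by
    ext x
    simp [hf, Fin.exists_fin_succ, Matrix.cons_val_zero, Matrix.cons_val_succ, or_comm,
      or_assoc, or_left_comm, eq_comm]
  have hinj : Function.Injective f := by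
    have : Set.InjOn f (univ : Finset (Fin 5)) := by
      rw [← Finset.card_image_iff, himg, hcard]; simp
    rw [Finset.coe_univ] at this
    exact Set.injOn_univ.1 this
  set e : Fin 5 ↪ V := ⟨f, hinj⟩ with he
  have hset : ({v₁, v₂, v₃, v₄, v₅} : Finset V) = (univ : Finset (Fin 5)).map e := by
    rw [Finset.map_eq_image]; exact himg.symm
  -- adjacency transfer
  have h21 := h12.symm; have h32 := h23.symm; have h43 := h34.symm
  have h54 := h45.symm; have h15 := h51.symm
  have h31 : ¬ G.Adj v₃ v₁ := fun h => h13 h.symm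
  have h41 : ¬ G.Adj v₄ v₁ := fun h => h14 h.symm
  have h42 : ¬ G.Adj v₄ v₂ := fun h => h24 h.symm
  have h52 : ¬ G.Adj v₅ v₂ := fun h => h25 h.symm
  have h53 : ¬ G.Adj v₅ v₃ := fun h => h35 h.symm
  have hadj : ∀ i j : Fin 5, G.Adj (f i) (f j) ↔ C5adj i j := by
    intro i j
    fin_cases i <;> fin_cases j <;>
      simp [hf, C5adj, G.irrefl, h12, h23, h34, h45, h51, h21, h32, h43, h54, h15,
        h13, h14, h24, h25, h35, h31, h41, h42, h52, h53]
  rw [hset, Finset.powersetCard_map, Finset.filter_map, Finset.card_map]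
  have hQ : ∀ T ∈ (univ : Finset (Fin 5)).powersetCard 3,
      (((∃ x y z : V, ({x, y, z} : Finset V) = T.map e ∧
          G.Adj x y ∧ G.Adj y z ∧ ¬ G.Adj x z) ∧
        ∀ w ∈ ((univ : Finset (Fin 5)).map e) \ (T.map e),
          w ∈ adjW G (T.map e)) ↔
      ((∃ a b c : Fin 5, ({a, b, c} : Finset (Fin 5)) = T ∧ C5adj a b ∧ C5adj b c ∧ ¬ C5adj a c) ∧
        ∀ i : Fin 5, i ∉ T → ∃ j ∈ T, C5adj i j)) := by
    intro T _
    constructor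
    · rintro ⟨⟨x, y, z, hxyz, hxy, hyz, hxz⟩, hall⟩
      have hx : x ∈ T.map e := by rw [← hxyz]; simp
      have hy : y ∈ T.map e := by rw [← hxyz]; simp
      have hz : z ∈ T.map e := by rw [← hxyz]; simp
      obtain ⟨a, ha, rfl⟩ := Finset.mem_map.1 hx
      obtain ⟨b, hb, rfl⟩ := Finset.mem_map.1 hy
      obtain ⟨c, hc, rfl⟩ := Finset.mem_map.1 hz
      refine ⟨⟨a, b, c, ?_, (hadj a b).1 hxy, (hadj b c).1 hyz, fun h => hxz ((hadj a c).2 h)⟩, ?_⟩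
      · apply Finset.map_injective e
        rw [← hxyz]; simp [Finset.map_insert]
      · intro i hi
        have hw : f i ∈ ((univ : Finset (Fin 5)).map e) \ (T.map e) :=
          Finset.mem_sdiff.2 ⟨Finset.mem_map_of_mem e (Finset.mem_univ i), fun h => by
            obtain ⟨j, hj, hje⟩ := Finset.mem_map.1 h
            exact hi (hinj hje ▸ hj)⟩
        have := hall _ hw
        simp only [adjW, Finset.mem_filter] at this
        obtain ⟨-, -, u, hu, hadju⟩ := this
        obtain ⟨j, hj, rfl⟩ := Finset.mem_map.1 hu
        exact ⟨j, hj, (hadj i j).1 hadju⟩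
    · rintro ⟨⟨a, b, c, habc, hab, hbc, hac⟩, hall⟩
      refine ⟨⟨f a, f b, f c, ?_, (hadj a b).2 hab, (hadj b c).2 hbc,
          fun h => hac ((hadj a c).1 h)⟩, ?_⟩
      · rw [← habc]; simp [Finset.map_insert, he]
      · intro w hw
        rw [Finset.mem_sdiff] at hw
        obtain ⟨i, -, rfl⟩ := Finset.mem_map.1 hw.1
        have hi : i ∉ T := fun h => hw.2 (Finset.mem_map_of_mem e h)
        obtain ⟨j, hj, hij⟩ := hall i hi
        simp only [adjW, Finset.mem_filter]
        exact ⟨Finset.mem_univ _, hw.2, f j, Finset.mem_map_of_mem e hj, (hadj i j).2 hij⟩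
  simp only [Function.comp_def, RelEmbedding.coe_toEmbedding, Finset.mapEmbedding_apply]
  refine (congrArg Finset.card (Finset.filter_congr hQ)).trans ?_
  decide
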